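/- Let d ≥ 1 and let p be an admissible triple of exponents. Then there exist constants c, C > 0, depending only on d and p, such that for every 2d×2d real matrix A, c ‖AᵀJA‖² ≤ ∬_{ℝ^{2d}×ℝ^{2d}} g_1(x) g_2(y) g_3(x+y) σ(Ax,Ay)² dx dy ≤ C ‖AᵀJA‖². -/

import Mathlib

open MeasureTheory Filter Matrix
open scoped Real ENNReal BigOperators InnerProductSpace

noncomputable section

namespace Stability

/-- Euclidean space `ℝ^n`. -/
abbrev E (n : ℕ) : Type := EuclideanSpace ℝ (Fin n)

/-- The underlying space `ℝ^{2d} × ℝ` of the Heisenberg group `ℍ^d`. -/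
abbrev H (d : ℕ) : Type := E (2 * d) × ℝ

/-- A triple of exponents `p ∈ (1,∞)^3` is admissible if `∑ 1/p_j = 2`. -/
def IsAdmissible (p : Fin 3 → ℝ) : Prop :=
  (∀ j, 1 < p j) ∧ (∑ j, (p j)⁻¹) = 2

/-- Conjugate exponent `p' = p/(p-1)`. -/
def conjExp (q : ℝ) : ℝ := q / (q - 1)

/-- The sharp Young constant `A_p`. -/
def youngA (p : Fin 3 → ℝ) : ℝ :=
  ∏ j, (p j) ^ (1 / (2 * p j)) / (conjExp (p j)) ^ (1 / (2 * conjExp (p j)))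

/-- `γ_j = π p_j'`. -/
def γexp (p : Fin 3 → ℝ) (j : Fin 3) : ℝ := Real.pi * conjExp (p j)

/-- The `L^q` norm (for a real exponent `q`) of a complex-valued function. -/
def Lnorm {α : Type*} [MeasureSpace α] (q : ℝ) (f : α → ℂ) : ℝ :=
  (∫ z, ‖f z‖ ^ q) ^ (1 / q)

/-- Membership of a triple of functions in `L^p = L^{p_1} × L^{p_2} × L^{p_3}`. -/
def MemLpT {α : Type*} [MeasureSpace α] (p : Fin 3 → ℝ) (f : Fin 3 → α → ℂ) : Prop :=
  ∀ j, MemLp (f j) (ENNReal.ofReal (p j)) volume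

/-- Maximum of a triple of reals. -/
def tmax (u : Fin 3 → ℝ) : ℝ := max (u 0) (max (u 1) (u 2))

/-- `‖f‖_p := max_j ‖f_j‖_{p_j}` for a triple of functions. -/
def tnorm {α : Type*} [MeasureSpace α] (p : Fin 3 → ℝ) (f : Fin 3 → α → ℂ) : ℝ :=
  tmax fun j => Lnorm (p j) (f j)

/-- The real Gaussian `exp(-γ_j |z|²)` on `ℝ^n`. -/
def gaussER (n : ℕ) (p : Fin 3 → ℝ) (j : Fin 3) : E n → ℝ :=
  fun z => Real.exp (-(γexp p j * ‖z‖ ^ 2))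

/-- The Gaussian `g_j(z) = exp(-γ_j |z|²)` on `ℝ^n`, as a complex-valued function. -/
def gaussE (n : ℕ) (p : Fin 3 → ℝ) (j : Fin 3) : E n → ℂ :=
  fun z => Complex.ofReal (gaussER n p j z)

/-- The trilinear form for convolution on `ℝ^n`. -/
def Tconv (n : ℕ) (f : Fin 3 → E n → ℂ) : ℂ :=
  ∫ x : E n, ∫ y : E n, f 0 x * f 1 y * f 2 (-x - y)

/-- Action of a matrix on `ℝ^n`. -/
def mapp {n : ℕ} (M : Matrix (Fin n) (Fin n) ℝ) (x : E n) : E n :=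
  Matrix.toEuclideanLin M x

/-- The (Euclidean) operator norm of a matrix. -/
def opNorm {n : ℕ} (M : Matrix (Fin n) (Fin n) ℝ) : ℝ :=
  ‖LinearMap.toContinuousLinearMap (Matrix.toEuclideanLin M)‖

/-- The standard symplectic form `σ(x,y) = ∑_{j<d} (x_j y_{j+d} - x_{j+d} y_j)` on `ℝ^{2d}`. -/
def symp (d : ℕ) (x y : E (2 * d)) : ℝ :=
  ∑ j : Fin d, (x ⟨j.1, by have := j.2; omega⟩ * y ⟨j.1 + d, by have := j.2; omega⟩
    - x ⟨j.1 + d, by have := j.2; omega⟩ * y ⟨j.1, by have := j.2; omega⟩)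

/-- The matrix `J` with `σ(x,y) = x ⬝ (J y)`. -/
def Jmat (d : ℕ) : Matrix (Fin (2 * d)) (Fin (2 * d)) ℝ :=
  Matrix.of fun i k =>
    if i.1 < d ∧ k.1 = i.1 + d then 1 else if k.1 + d = i.1 then -1 else 0

/-- A symplectic matrix. -/
def IsSymplectic (d : ℕ) (S : Matrix (Fin (2 * d)) (Fin (2 * d)) ℝ) : Prop :=
  ∀ x y : E (2 * d), symp d (mapp S x) (mapp S y) = symp d x y

/-- The Heisenberg group law `(x,t)·(x',t') = (x+x', t+t'+σ(x,x'))`. -/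
def hMul (d : ℕ) (z w : H d) : H d := (z.1 + w.1, z.2 + w.2 + symp d z.1 w.1)

/-- Inversion `(x,t)⁻¹ = (-x,-t)` in the Heisenberg group. -/
def hInv (d : ℕ) (z : H d) : H d := (-z.1, -z.2)

/-- The trilinear form for convolution on the Heisenberg group `ℍ^d`. -/
def THeis (d : ℕ) (f : Fin 3 → H d → ℂ) : ℂ :=
  ∫ z1 : H d, ∫ z2 : H d, f 0 z1 * f 1 z2 * f 2 (hMul d (hInv d z2) (hInv d z1))

/-- The generators of the symmetry group `Σ(T_{ℍ^d})`: scalings, dilations, translations,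
the diagonal action of the symplectic group, shear transformations, and modulations in `x`.
Each family of generators is closed under inversion, so the closure of this set under
composition is exactly the group generated by these symmetries. -/
def heisGens (d : ℕ) : Set (Function.End (Fin 3 → H d → ℂ)) :=
  {Ψ | (∃ a : Fin 3 → ℂ, (∀ j, a j ≠ 0) ∧ Ψ = fun f j z => a j * f j z) ∨
       (∃ r : ℝ, 0 < r ∧ Ψ = fun f j z => f j (r • z.1, r ^ 2 * z.2)) ∨
       (∃ u : Fin 3 → H d, Ψ = fun f j z => f j (hMul d (hMul d (u j) z) (hInv d (u (j + 1))))) ∨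
       (∃ S, IsSymplectic d S ∧ Ψ = fun f j z => f j (mapp S z.1, z.2)) ∨
       (∃ φ : E (2 * d) →ₗ[ℝ] ℝ, Ψ = fun f j z => f j (z.1, z.2 + φ z.1)) ∨
       (∃ u : E (2 * d), Ψ = fun f j z => Complex.exp (Complex.I * Complex.ofReal ⟪u, z.1⟫_ℝ) * f j z)}

/-- The symmetry group `Σ(T_{ℍ^d})` (as a monoid of transformations; since the generating
set is closed under inversion this coincides with the generated group). -/
def heisSym (d : ℕ) : Submonoid (Function.End (Fin 3 → H d → ℂ)) :=
  Submonoid.closure (heisGens d)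

/-- The canonical Gaussian `G(x,t) = exp(-|Lx|² - a t² + i b t)` on `ℍ^d`. -/
def canonGauss (d : ℕ) (L : Matrix (Fin (2 * d)) (Fin (2 * d)) ℝ) (a b : ℝ) : H d → ℂ :=
  fun z => Complex.exp (Complex.ofReal (-(‖mapp L z.1‖ ^ 2) - a * z.2 ^ 2) +
    Complex.I * Complex.ofReal (b * z.2))

/-- The parameters `(L,a,b)` define a canonical `ε`-diffuse Gaussian. -/
def IsCanonDiffuse (d : ℕ) (ε : ℝ) (L : Matrix (Fin (2 * d)) (Fin (2 * d)) ℝ)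
    (a b : ℝ) : Prop :=
  0 < a ∧ IsUnit L.det ∧ max (max a (Real.sqrt a)) b * opNorm L⁻¹ < ε

/-- `G` is an `ε`-diffuse, `p`-compatible ordered triple of Gaussians: `G = Ψ G̃` for a
symmetry `Ψ ∈ Σ(T_{ℍ^d})` and a `p`-compatible triple `G̃` of canonical `ε`-diffuse
Gaussians, i.e. `G̃_j = exp(-|L_j x|² - a_j t² + i b_j t)` with `L_j = γ_j^{1/2} L`,
`a_j = γ_j a`, `b_j = b`. -/
def IsCompatibleDiffuse (d : ℕ) (p : Fin 3 → ℝ) (ε : ℝ) (G : Fin 3 → H d → ℂ) : Prop :=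
  ∃ Ψ ∈ heisSym d, ∃ L : Matrix (Fin (2 * d)) (Fin (2 * d)) ℝ, ∃ a b : ℝ,
    (∀ j, IsCanonDiffuse d ε (Real.sqrt (γexp p j) • L) (γexp p j * a) b) ∧
    G = Ψ (fun j => canonGauss d (Real.sqrt (γexp p j) • L) (γexp p j * a) b)

/-- The real Gaussian `exp(-γ_j(|x|²+t²))` on `ℝ^{2d} × ℝ`. -/
def gaussHR (d : ℕ) (p : Fin 3 → ℝ) (j : Fin 3) : H d → ℝ :=
  fun z => Real.exp (-(γexp p j * (‖z.1‖ ^ 2 + z.2 ^ 2)))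

/-- The Gaussian `g_j(x,t) = exp(-γ_j(|x|²+t²))` on `ℝ^{2d} × ℝ`, complex-valued. -/
def gaussH (d : ℕ) (p : Fin 3 → ℝ) (j : Fin 3) : H d → ℂ :=
  fun z => Complex.ofReal (gaussHR d p j z)

/-- The generalized trilinear form `T(f,A,b)`. -/
def Tgen (d : ℕ) (f : Fin 3 → H d → ℂ) (A : Matrix (Fin (2 * d)) (Fin (2 * d)) ℝ)
    (b : ℝ) : ℂ :=
  ∫ z1 : H d, ∫ z2 : H d,
    f 0 z1 * f 1 z2 *
      f 2 (-(z1.1 + z2.1), -(z1.2 + z2.2 + symp d (mapp A z1.1) (mapp A z2.1))) *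
      Complex.exp (Complex.I * Complex.ofReal (b * symp d (mapp A z1.1) (mapp A z2.1)))

/-- The group law `(x,t)·_A(x',t') = (x+x', t+t'+σ(Ax,Ax'))`. -/
def hMulA (d : ℕ) (A : Matrix (Fin (2 * d)) (Fin (2 * d)) ℝ) (z w : H d) : H d :=
  (z.1 + w.1, z.2 + w.2 + symp d (mapp A z.1) (mapp A w.1))

/-- The state space on which the symmetries of `T(f,A,b)` act: a triple of functions
together with the attached parameters `(A,b)`. -/
abbrev X (d : ℕ) : Type :=
  (Fin 3 → H d → ℂ) × Matrix (Fin (2 * d)) (Fin (2 * d)) ℝ × ℝ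

/-- The generators of `𝔊₀`: the diagonal `GL(2d)` action and modulation in the last
coordinate. Each family is closed under inversion. -/
def G0gens (d : ℕ) : Set (Function.End (X d)) :=
  {Ψ | (∃ L : Matrix (Fin (2 * d)) (Fin (2 * d)) ℝ, IsUnit L.det ∧
          Ψ = fun s => (fun j z => s.1 j (mapp L z.1, z.2), s.2.1 * L, s.2.2)) ∨
       (∃ ξ : ℝ,
          Ψ = fun s => (fun j z => Complex.exp (Complex.I * Complex.ofReal (ξ * z.2)) * s.1 j z,
            s.2.1, s.2.2 + ξ))}

/-- The group `𝔊₀` (as a monoid of transformations; the generating set is closed under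
inversion so this coincides with the generated group). -/
def G0 (d : ℕ) : Submonoid (Function.End (X d)) := Submonoid.closure (G0gens d)

/-- The generators of `𝔊₁`: scalings, dilations, translation–modulation symmetries,
the diagonal symplectic action, shears, and modulations in `x`. -/
def G1gens (d : ℕ) : Set (Function.End (X d)) :=
  {Ψ | (∃ a : Fin 3 → ℂ, (∀ j, a j ≠ 0) ∧
          Ψ = fun s => (fun j z => a j * s.1 j z, s.2.1, s.2.2)) ∨
       (∃ r : ℝ, 0 < r ∧
          Ψ = fun s => (fun j z => s.1 j (r • z.1, r ^ 2 * z.2), s.2.1, r ^ 2 * s.2.2)) ∨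
       (∃ U : Fin 3 → H d,
          Ψ = fun s => (fun j z =>
            (if j = 0 then
                Complex.exp (Complex.I * Complex.ofReal
                  ⟪(-(s.2.2)) • mapp ((s.2.1)ᵀ * Jmat d * s.2.1) ((U 1).1 - (U 2).1), z.1⟫_ℝ)
             else if j = 1 then
                Complex.exp (Complex.I * Complex.ofReal
                  ⟪(-(s.2.2)) • mapp (((s.2.1)ᵀ * Jmat d * s.2.1)ᵀ) ((U 0).1 - (U 1).1), z.1⟫_ℝ)
             else 1) *
            s.1 j (hMulA d s.2.1 (hMulA d s.2.1 (U j) z) (hInv d (U (j + 1)))),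
           s.2.1, s.2.2)) ∨
       (∃ S, IsSymplectic d S ∧
          Ψ = fun s => (fun j z => s.1 j (mapp S z.1, z.2), s.2.1, s.2.2)) ∨
       (∃ φ : E (2 * d) →ₗ[ℝ] ℝ,
          Ψ = fun s => (fun j z => s.1 j (z.1, z.2 + φ z.1), s.2.1, s.2.2)) ∨
       (∃ u : E (2 * d),
          Ψ = fun s => (fun j z => Complex.exp (Complex.I * Complex.ofReal ⟪u, z.1⟫_ℝ) * s.1 j z,
            s.2.1, s.2.2))}

/-- The group `𝔊₁` (as a monoid of transformations; the generating set is closed under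
inversion so this coincides with the generated group). -/
def G1 (d : ℕ) : Submonoid (Function.End (X d)) := Submonoid.closure (G1gens d)

/-- The orbit `Õ(f,A,b)`: all `Ψ₀ Ψ₁ ((e^{-ibt} f) ∘ A⁻¹, Id, 0)` with `Ψ₀ ∈ 𝔊₀`,
`Ψ₁ ∈ 𝔊₁`. -/
def tildeO (d : ℕ) (f : Fin 3 → H d → ℂ) (A : Matrix (Fin (2 * d)) (Fin (2 * d)) ℝ)
    (b : ℝ) : Set (X d) :=
  {y | ∃ Ψ₀ ∈ G0 d, ∃ Ψ₁ ∈ G1 d,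
    y = Ψ₀ (Ψ₁ (fun j z => Complex.exp (-(Complex.I * Complex.ofReal (b * z.2))) *
          f j (mapp A⁻¹ z.1, z.2), 1, 0))}

/-- The squared distance `dist_p(Õ(f,A,b),(g,0,0))²`. -/
def distSq (d : ℕ) (p : Fin 3 → ℝ) (f : Fin 3 → H d → ℂ)
    (A : Matrix (Fin (2 * d)) (Fin (2 * d)) ℝ) (b : ℝ) : ℝ :=
  sInf ((fun y => (tmax fun j => Lnorm (p j) (y.1 j - gaussH d p j)) ^ 2
      + opNorm ((y.2.1)ᵀ * Jmat d * y.2.1) ^ 2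
      + y.2.2 ^ 2 * opNorm ((y.2.1)ᵀ * Jmat d * y.2.1) ^ 2) '' tildeO d f A b)

/-- The group–structure difference form `T'`. -/
def T'op (d : ℕ) (A : Matrix (Fin (2 * d)) (Fin (2 * d)) ℝ) (h : Fin 3 → H d → ℂ) : ℂ :=
  ∫ z1 : H d, ∫ z2 : H d, h 0 z1 * h 1 z2 *
    (h 2 (-(z1.1 + z2.1), -(z1.2 + z2.2 + symp d (mapp A z1.1) (mapp A z2.1)))
      - h 2 (-(z1.1 + z2.1), -(z1.2 + z2.2)))

/-- The twisting–factor difference form `T''`. -/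
def T''op (d : ℕ) (A : Matrix (Fin (2 * d)) (Fin (2 * d)) ℝ) (b : ℝ)
    (h : Fin 3 → H d → ℂ) : ℂ :=
  ∫ z1 : H d, ∫ z2 : H d, h 0 z1 * h 1 z2 *
    h 2 (-(z1.1 + z2.1), -(z1.2 + z2.2 + symp d (mapp A z1.1) (mapp A z2.1))) *
    (Complex.exp (Complex.I * Complex.ofReal (b * symp d (mapp A z1.1) (mapp A z2.1))) - 1)

/-- The part `f_♯` of `f`: `f_♯(z) = f(z)` when `|f(z)| ≤ η g(z)`, else `0`. -/
def fSharp {α : Type*} (η : ℝ) (gR : α → ℝ) (f : α → ℂ) : α → ℂ :=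
  fun z => if ‖f z‖ ≤ η * gR z then f z else 0

/-- The part `f_♭ = f - f_♯`. -/
def fFlat {α : Type*} (η : ℝ) (gR : α → ℝ) (f : α → ℂ) : α → ℂ :=
  fun z => f z - fSharp η gR f z

/-- The generators of the symmetry group of convolution on `ℝ^n`: scalings, translations
(with `v₁+v₂+v₃ = 0`), common modulations, and the diagonal `GL(n)` action. Each family
is closed under inversion. -/
def euclGens (n : ℕ) : Set (Function.End (Fin 3 → E n → ℂ)) :=
  {Ψ | (∃ a : Fin 3 → ℂ, (∀ j, a j ≠ 0) ∧ Ψ = fun f j x => a j * f j x) ∨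
       (∃ v : Fin 3 → E n, v 0 + v 1 + v 2 = 0 ∧ Ψ = fun f j x => f j (x + v j)) ∨
       (∃ ξ : E n, Ψ = fun f j x => Complex.exp (Complex.I * Complex.ofReal ⟪ξ, x⟫_ℝ) * f j x) ∨
       (∃ L : Matrix (Fin n) (Fin n) ℝ, IsUnit L.det ∧ Ψ = fun f j x => f j (mapp L x))}

/-- The symmetry group of Euclidean convolution (as a monoid of transformations; the
generating set is closed under inversion so this coincides with the generated group). -/
def euclSym (n : ℕ) : Submonoid (Function.End (Fin 3 → E n → ℂ)) :=
  Submonoid.closure (euclGens n)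

/-- The orbit `O(f)` of a triple under the symmetries of Euclidean convolution. -/
def euclOrbit (n : ℕ) (f : Fin 3 → E n → ℂ) : Set (Fin 3 → E n → ℂ) :=
  {h | ∃ Ψ ∈ euclSym n, h = Ψ f}

/-- `dist_p(O(f), g) = inf_{h ∈ O(f)} max_j ‖h_j - g_j‖_{p_j}`. -/
def euclDist (n : ℕ) (p : Fin 3 → ℝ) (f : Fin 3 → E n → ℂ) : ℝ :=
  sInf ((fun h => tmax fun j => Lnorm (p j) (h j - gaussE n p j)) '' euclOrbit n f)

/-- `P` is the family of normalized orthogonal polynomials `P_n^{(t)}`: for `t > 0`,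
`P_n^{(t)}` has degree `n`, positive leading coefficient, `‖P_n^{(t)} e^{-tπx²}‖_{L²} = 1`
and `P_n^{(t)} e^{-tπx²} ⊥ P_k^{(t)} e^{-tπx²}` for `k < n`. -/
def IsHermiteFamily (P : ℝ → ℕ → Polynomial ℝ) : Prop :=
  ∀ t : ℝ, 0 < t → ∀ n : ℕ,
    (P t n).degree = n ∧ 0 < (P t n).leadingCoeff ∧
    (∫ x : ℝ, ((P t n).eval x) ^ 2 * Real.exp (-(2 * t * Real.pi * x ^ 2))) = 1 ∧
    ∀ k : ℕ, k < n →
      (∫ x : ℝ, (P t n).eval x * (P t k).eval x * Real.exp (-(2 * t * Real.pi * x ^ 2))) = 0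

/-- `τ_j = p_j p_j' / 2`. -/
def τexp (p : Fin 3 → ℝ) (j : Fin 3) : ℝ := p j * conjExp (p j) / 2

/-- `⟨Re f_j, P_α^{(τ_j)} g_j^{p_j-1}⟩` on `ℝ^{2d+1}`. -/
def pairReE (d : ℕ) (p : Fin 3 → ℝ) (P : ℝ → ℕ → Polynomial ℝ)
    (f : Fin 3 → E (2 * d + 1) → ℂ) (j : Fin 3) (α : Fin (2 * d + 1) → ℕ) : ℝ :=
  ∫ z : E (2 * d + 1), (f j z).re * (∏ k, (P (τexp p j) (α k)).eval (z k)) *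
    (gaussER (2 * d + 1) p j z) ^ (p j - 1)

/-- `⟨Im f_j, P_α^{(τ_j)} g_j^{p_j-1}⟩` on `ℝ^{2d+1}`. -/
def pairImE (d : ℕ) (p : Fin 3 → ℝ) (P : ℝ → ℕ → Polynomial ℝ)
    (f : Fin 3 → E (2 * d + 1) → ℂ) (j : Fin 3) (α : Fin (2 * d + 1) → ℕ) : ℝ :=
  ∫ z : E (2 * d + 1), (f j z).im * (∏ k, (P (τexp p j) (α k)).eval (z k)) *
    (gaussER (2 * d + 1) p j z) ^ (p j - 1)

/-- The orthogonality conditions of the sharpened Young inequality, on `ℝ^{2d+1}`. -/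
def OrthCondsE (d : ℕ) (p : Fin 3 → ℝ) (P : ℝ → ℕ → Polynomial ℝ)
    (f : Fin 3 → E (2 * d + 1) → ℂ) : Prop :=
  (∀ j, pairReE d p P f j 0 = 0 ∧ pairImE d p P f j 0 = 0) ∧
  (∀ α : Fin (2 * d + 1) → ℕ, (∑ k, α k) = 1 →
      pairReE d p P f 0 α = 0 ∧ pairReE d p P f 1 α = 0 ∧ pairImE d p P f 2 α = 0) ∧
  (∀ α : Fin (2 * d + 1) → ℕ, (∑ k, α k) = 2 → pairReE d p P f 2 α = 0)

/-- The `k`-th coordinate of a point of `ℝ^{2d} × ℝ`, viewed as a point of `ℝ^{2d+1}`. -/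
def coordH (d : ℕ) (z : H d) (k : Fin (2 * d + 1)) : ℝ :=
  if h : (k : ℕ) < 2 * d then z.1 ⟨k, h⟩ else z.2

/-- `⟨Re f_j, P_α^{(τ_j)} g_j^{p_j-1}⟩` on `ℝ^{2d} × ℝ ≅ ℝ^{2d+1}`. -/
def pairReH (d : ℕ) (p : Fin 3 → ℝ) (P : ℝ → ℕ → Polynomial ℝ)
    (f : Fin 3 → H d → ℂ) (j : Fin 3) (α : Fin (2 * d + 1) → ℕ) : ℝ :=
  ∫ z : H d, (f j z).re * (∏ k, (P (τexp p j) (α k)).eval (coordH d z k)) *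
    (gaussHR d p j z) ^ (p j - 1)

/-- `⟨Im f_j, P_α^{(τ_j)} g_j^{p_j-1}⟩` on `ℝ^{2d} × ℝ ≅ ℝ^{2d+1}`. -/
def pairImH (d : ℕ) (p : Fin 3 → ℝ) (P : ℝ → ℕ → Polynomial ℝ)
    (f : Fin 3 → H d → ℂ) (j : Fin 3) (α : Fin (2 * d + 1) → ℕ) : ℝ :=
  ∫ z : H d, (f j z).im * (∏ k, (P (τexp p j) (α k)).eval (coordH d z k)) *
    (gaussHR d p j z) ^ (p j - 1)

/-- The orthogonality conditions, on `ℝ^{2d} × ℝ ≅ ℝ^{2d+1}`. -/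
def OrthCondsH (d : ℕ) (p : Fin 3 → ℝ) (P : ℝ → ℕ → Polynomial ℝ)
    (f : Fin 3 → H d → ℂ) : Prop :=
  (∀ j, pairReH d p P f j 0 = 0 ∧ pairImH d p P f j 0 = 0) ∧
  (∀ α : Fin (2 * d + 1) → ℕ, (∑ k, α k) = 1 →
      pairReH d p P f 0 α = 0 ∧ pairReH d p P f 1 α = 0 ∧ pairImH d p P f 2 α = 0) ∧
  (∀ α : Fin (2 * d + 1) → ℕ, (∑ k, α k) = 2 → pairReH d p P f 2 α = 0)


section Statement7Aux

/-- positivity of γ -/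
lemma gamma_pos {p : Fin 3 → ℝ} (hp : IsAdmissible p) (j : Fin 3) : 0 < γexp p j := by
  have h1 := hp.1 j
  have : 0 < conjExp (p j) := div_pos (by linarith) (by linarith)
  exact mul_pos Real.pi_pos this

lemma gaussER_pos (n : ℕ) (p : Fin 3 → ℝ) (j : Fin 3) (z : E n) : 0 < gaussER n p j z :=
  Real.exp_pos _

lemma gaussER_le_one {n : ℕ} {p : Fin 3 → ℝ} (hp : IsAdmissible p) (j : Fin 3) (z : E n) :
    gaussER n p j z ≤ 1 := by
  apply Real.exp_le_one_iff.mpr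
  have := gamma_pos hp j
  have : 0 ≤ γexp p j * ‖z‖ ^ 2 := by positivity
  linarith

lemma gaussER_cont (n : ℕ) (p : Fin 3 → ℝ) (j : Fin 3) : Continuous (gaussER n p j) := by
  unfold gaussER; fun_prop

/-- The Gaussian weight on the product space. -/
def WW (d : ℕ) (p : Fin 3 → ℝ) (z : E (2 * d) × E (2 * d)) : ℝ :=
  gaussER (2 * d) p 0 z.1 * gaussER (2 * d) p 1 z.2 * gaussER (2 * d) p 2 (z.1 + z.2)

/-- dominating function -/
def PP (d : ℕ) (p : Fin 3 → ℝ) (z : E (2 * d) × E (2 * d)) : ℝ :=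
  (‖z.1‖ ^ 2 * gaussER (2 * d) p 0 z.1) * (‖z.2‖ ^ 2 * gaussER (2 * d) p 1 z.2)

lemma WW_pos (d : ℕ) (p : Fin 3 → ℝ) (z : E (2 * d) × E (2 * d)) : 0 < WW d p z := by
  exact mul_pos (mul_pos (gaussER_pos _ _ _ _) (gaussER_pos _ _ _ _)) (gaussER_pos _ _ _ _)

lemma WW_cont (d : ℕ) (p : Fin 3 → ℝ) : Continuous (WW d p) := by
  unfold WW gaussER; fun_prop

lemma WW_mul_le {d : ℕ} {p : Fin 3 → ℝ} (hp : IsAdmissible p) (z : E (2 * d) × E (2 * d)) :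
    WW d p z * (‖z.1‖ ^ 2 * ‖z.2‖ ^ 2) ≤ PP d p z := by
  have h2 : gaussER (2 * d) p 2 (z.1 + z.2) ≤ 1 := gaussER_le_one hp 2 _
  have h0 := gaussER_pos (2 * d) p 0 z.1
  have h1 := gaussER_pos (2 * d) p 1 z.2
  have hW : WW d p z ≤ gaussER (2 * d) p 0 z.1 * gaussER (2 * d) p 1 z.2 := by
    unfold WW
    calc gaussER (2 * d) p 0 z.1 * gaussER (2 * d) p 1 z.2 * gaussER (2 * d) p 2 (z.1 + z.2)
        ≤ gaussER (2 * d) p 0 z.1 * gaussER (2 * d) p 1 z.2 * 1 :=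
          mul_le_mul_of_nonneg_left h2 (by positivity)
      _ = _ := mul_one _
  calc WW d p z * (‖z.1‖ ^ 2 * ‖z.2‖ ^ 2)
      ≤ (gaussER (2 * d) p 0 z.1 * gaussER (2 * d) p 1 z.2) * (‖z.1‖ ^ 2 * ‖z.2‖ ^ 2) :=
        mul_le_mul_of_nonneg_right hW (by positivity)
    _ = PP d p z := by unfold PP; ring

lemma integrable_gauss (n : ℕ) {b : ℝ} (hb : 0 < b) :
    Integrable (fun x : E n => Real.exp (-(b * ‖x‖ ^ 2))) := by
  have h := (GaussianFourier.integrable_cexp_neg_mul_sq_norm_add (V := E n)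
      (b := (b : ℂ)) (by simpa using hb) 0 0).norm
  refine h.congr (Filter.Eventually.of_forall fun x => ?_)
  have : (-(b : ℂ) * (‖x‖ : ℂ) ^ 2 + 0 * (⟪(0 : E n), x⟫_ℝ : ℂ)) = ((-(b * ‖x‖ ^ 2) : ℝ) : ℂ) := by
    push_cast; ring
  simp only [this, Complex.norm_exp, Complex.ofReal_re, Real.norm_eq_abs,
    abs_of_pos (Real.exp_pos _)]

lemma integrable_sq_gauss (n : ℕ) {b : ℝ} (hb : 0 < b) :
    Integrable (fun x : E n => ‖x‖ ^ 2 * Real.exp (-(b * ‖x‖ ^ 2))) := by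
  refine Integrable.mono' ((integrable_gauss n (half_pos hb)).const_mul (2 / b))
    (Continuous.aestronglyMeasurable (by fun_prop)) (Filter.Eventually.of_forall fun x => ?_)
  have ht : (0:ℝ) ≤ ‖x‖ ^ 2 := by positivity
  have key : b / 2 * ‖x‖ ^ 2 ≤ Real.exp (b / 2 * ‖x‖ ^ 2) := (Real.add_one_le_exp _).trans' (by linarith)
  have h2 : ‖x‖ ^ 2 ≤ 2 / b * Real.exp (b / 2 * ‖x‖ ^ 2) := by
    have h3 := mul_le_mul_of_nonneg_left key (by positivity : (0:ℝ) ≤ 2 / b)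
    calc ‖x‖ ^ 2 = 2 / b * (b / 2 * ‖x‖ ^ 2) := by field_simp
      _ ≤ _ := h3
  have hexp : (0:ℝ) < Real.exp (-(b * ‖x‖ ^ 2)) := Real.exp_pos _
  have : ‖x‖ ^ 2 * Real.exp (-(b * ‖x‖ ^ 2)) ≤
      2 / b * Real.exp (-(b / 2 * ‖x‖ ^ 2)) := by
    calc ‖x‖ ^ 2 * Real.exp (-(b * ‖x‖ ^ 2))
        ≤ (2 / b * Real.exp (b / 2 * ‖x‖ ^ 2)) * Real.exp (-(b * ‖x‖ ^ 2)) :=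
          mul_le_mul_of_nonneg_right h2 hexp.le
      _ = 2 / b * Real.exp (-(b / 2 * ‖x‖ ^ 2)) := by
          rw [mul_assoc, ← Real.exp_add]; ring_nf
  calc ‖‖x‖ ^ 2 * Real.exp (-(b * ‖x‖ ^ 2))‖ = ‖x‖ ^ 2 * Real.exp (-(b * ‖x‖ ^ 2)) := by
        rw [Real.norm_eq_abs, abs_of_nonneg (by positivity)]
    _ ≤ 2 / b * Real.exp (-(b / 2 * ‖x‖ ^ 2)) := this

lemma integrable_PP {d : ℕ} {p : Fin 3 → ℝ} (hp : IsAdmissible p) : Integrable (PP d p) := by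
  rw [show (volume : Measure (E (2 * d) × E (2 * d))) = volume.prod volume from
    Measure.volume_eq_prod _ _]
  exact (integrable_sq_gauss (2 * d) (gamma_pos hp 0)).mul_prod
    (integrable_sq_gauss (2 * d) (gamma_pos hp 1))

end Statement7Aux
section Statement7Aux2

/-- The quadratic functional. -/
def QQ (d : ℕ) (p : Fin 3 → ℝ) (T : E (2 * d) →L[ℝ] E (2 * d)) : ℝ :=
  ∫ z : E (2 * d) × E (2 * d), WW d p z * ⟪z.1, T z.2⟫_ℝ ^ 2

lemma abs_inner_clm_le {d : ℕ} (T : E (2 * d) →L[ℝ] E (2 * d)) (x y : E (2 * d)) :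
    |⟪x, T y⟫_ℝ| ≤ ‖T‖ * (‖x‖ * ‖y‖) := by
  calc |⟪x, T y⟫_ℝ| ≤ ‖x‖ * ‖T y‖ := abs_real_inner_le_norm _ _
    _ ≤ ‖x‖ * (‖T‖ * ‖y‖) := by
        have := T.le_opNorm y
        have hx : (0:ℝ) ≤ ‖x‖ := norm_nonneg _
        nlinarith
    _ = ‖T‖ * (‖x‖ * ‖y‖) := by ring

lemma QQ_integrand_integrable {d : ℕ} {p : Fin 3 → ℝ} (hp : IsAdmissible p)
    (T : E (2 * d) →L[ℝ] E (2 * d)) :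
    Integrable (fun z : E (2 * d) × E (2 * d) => WW d p z * ⟪z.1, T z.2⟫_ℝ ^ 2) := by
  refine Integrable.mono' ((integrable_PP hp).const_mul (‖T‖ ^ 2))
    (Continuous.aestronglyMeasurable ?_) (Filter.Eventually.of_forall fun z => ?_)
  · exact (WW_cont d p).mul ((continuous_fst.inner ((T.continuous).comp continuous_snd)).pow 2)
  · have hW := (WW_pos d p z).le
    have h1 : ⟪z.1, T z.2⟫_ℝ ^ 2 ≤ ‖T‖ ^ 2 * (‖z.1‖ ^ 2 * ‖z.2‖ ^ 2) := by
      calc ⟪z.1, T z.2⟫_ℝ ^ 2 = |⟪z.1, T z.2⟫_ℝ| ^ 2 := (sq_abs _).symm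
        _ ≤ (‖T‖ * (‖z.1‖ * ‖z.2‖)) ^ 2 :=
            pow_le_pow_left₀ (abs_nonneg _) (abs_inner_clm_le T z.1 z.2) 2
        _ = ‖T‖ ^ 2 * (‖z.1‖ ^ 2 * ‖z.2‖ ^ 2) := by ring
    calc ‖WW d p z * ⟪z.1, T z.2⟫_ℝ ^ 2‖ = WW d p z * ⟪z.1, T z.2⟫_ℝ ^ 2 := by
          rw [Real.norm_eq_abs, abs_of_nonneg (mul_nonneg hW (sq_nonneg _))]
      _ ≤ WW d p z * (‖T‖ ^ 2 * (‖z.1‖ ^ 2 * ‖z.2‖ ^ 2)) :=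
          mul_le_mul_of_nonneg_left h1 hW
      _ = ‖T‖ ^ 2 * (WW d p z * (‖z.1‖ ^ 2 * ‖z.2‖ ^ 2)) := by ring
      _ ≤ ‖T‖ ^ 2 * PP d p z := by
          have := WW_mul_le hp z
          nlinarith [sq_nonneg ‖T‖]

lemma integrable_WW_xy {d : ℕ} {p : Fin 3 → ℝ} (hp : IsAdmissible p) :
    Integrable (fun z : E (2 * d) × E (2 * d) => WW d p z * (‖z.1‖ ^ 2 * ‖z.2‖ ^ 2)) := by
  refine Integrable.mono' (integrable_PP hp) (Continuous.aestronglyMeasurable ?_)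
    (Filter.Eventually.of_forall fun z => ?_)
  · exact (WW_cont d p).mul (((continuous_norm.comp continuous_fst).pow 2).mul
      ((continuous_norm.comp continuous_snd).pow 2))
  · rw [Real.norm_eq_abs, abs_of_nonneg (mul_nonneg (WW_pos d p z).le (by positivity))]
    exact WW_mul_le hp z

/-- The fourth moment. -/
def II (d : ℕ) (p : Fin 3 → ℝ) : ℝ :=
  ∫ z : E (2 * d) × E (2 * d), WW d p z * (‖z.1‖ ^ 2 * ‖z.2‖ ^ 2)

lemma II_nonneg (d : ℕ) (p : Fin 3 → ℝ) : 0 ≤ II d p :=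
  integral_nonneg fun z => mul_nonneg (WW_pos d p z).le (by positivity)

lemma QQ_sub_est {d : ℕ} {p : Fin 3 → ℝ} (hp : IsAdmissible p)
    (T T₀ : E (2 * d) →L[ℝ] E (2 * d)) :
    |QQ d p T - QQ d p T₀| ≤ ‖T - T₀‖ * (‖T‖ + ‖T₀‖) * II d p := by
  have hT := QQ_integrand_integrable hp T
  have hT₀ := QQ_integrand_integrable hp T₀
  rw [QQ, QQ, ← integral_sub hT hT₀]
  have hpoint : ∀ z : E (2 * d) × E (2 * d),
      |WW d p z * ⟪z.1, T z.2⟫_ℝ ^ 2 - WW d p z * ⟪z.1, T₀ z.2⟫_ℝ ^ 2| ≤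
        ‖T - T₀‖ * (‖T‖ + ‖T₀‖) * (WW d p z * (‖z.1‖ ^ 2 * ‖z.2‖ ^ 2)) := by
    intro z
    set a := ⟪z.1, T z.2⟫_ℝ with ha
    set b := ⟪z.1, T₀ z.2⟫_ℝ with hb
    have hW := (WW_pos d p z).le
    have hab : a - b = ⟪z.1, (T - T₀) z.2⟫_ℝ := by
      rw [ContinuousLinearMap.sub_apply, inner_sub_right]
    have hab' : a + b = ⟪z.1, (T + T₀) z.2⟫_ℝ := by
      rw [ContinuousLinearMap.add_apply, inner_add_right]
    have h1 : |a - b| ≤ ‖T - T₀‖ * (‖z.1‖ * ‖z.2‖) := by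
      rw [hab]; exact abs_inner_clm_le _ _ _
    have h2 : |a + b| ≤ (‖T‖ + ‖T₀‖) * (‖z.1‖ * ‖z.2‖) := by
      rw [hab']
      refine (abs_inner_clm_le _ _ _).trans ?_
      have := norm_add_le T T₀
      have h3 : (0:ℝ) ≤ ‖z.1‖ * ‖z.2‖ := by positivity
      nlinarith
    calc |WW d p z * a ^ 2 - WW d p z * b ^ 2|
        = |WW d p z * ((a - b) * (a + b))| := by congr 1; ring
      _ = WW d p z * (|a - b| * |a + b|) := by
          rw [abs_mul, abs_mul, abs_of_nonneg hW]
      _ ≤ WW d p z * ((‖T - T₀‖ * (‖z.1‖ * ‖z.2‖)) * ((‖T‖ + ‖T₀‖) * (‖z.1‖ * ‖z.2‖))) := by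
          refine mul_le_mul_of_nonneg_left ?_ hW
          exact mul_le_mul h1 h2 (abs_nonneg _) (by positivity)
      _ = ‖T - T₀‖ * (‖T‖ + ‖T₀‖) * (WW d p z * (‖z.1‖ ^ 2 * ‖z.2‖ ^ 2)) := by ring
  rw [← Real.norm_eq_abs]
  refine (norm_integral_le_integral_norm _).trans ?_
  calc ∫ z : E (2 * d) × E (2 * d),
        ‖WW d p z * ⟪z.1, T z.2⟫_ℝ ^ 2 - WW d p z * ⟪z.1, T₀ z.2⟫_ℝ ^ 2‖
      ≤ ∫ z : E (2 * d) × E (2 * d),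
        ‖T - T₀‖ * (‖T‖ + ‖T₀‖) * (WW d p z * (‖z.1‖ ^ 2 * ‖z.2‖ ^ 2)) := by
        exact integral_mono (hT.sub hT₀).norm (((integrable_WW_xy hp)).const_mul _)
          fun z => (Real.norm_eq_abs _).trans_le (hpoint z)
    _ = ‖T - T₀‖ * (‖T‖ + ‖T₀‖) * II d p := integral_const_mul _ _

lemma QQ_cont {d : ℕ} {p : Fin 3 → ℝ} (hp : IsAdmissible p) : Continuous (QQ d p) := by
  rw [continuous_iff_continuousAt]
  intro T₀
  rw [ContinuousAt, tendsto_iff_dist_tendsto_zero]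
  refine squeeze_zero (fun _ => dist_nonneg)
    (fun T => (Real.dist_eq _ _).trans_le (QQ_sub_est hp T T₀)) ?_
  have hg : Continuous fun T : E (2 * d) →L[ℝ] E (2 * d) =>
      ‖T - T₀‖ * (‖T‖ + ‖T₀‖) * II d p := by fun_prop
  rw [show (0:ℝ) = ‖T₀ - T₀‖ * (‖T₀‖ + ‖T₀‖) * II d p by rw [sub_self, norm_zero, zero_mul, zero_mul]]
  exact hg.tendsto T₀

lemma QQ_nonneg (d : ℕ) (p : Fin 3 → ℝ) (T : E (2 * d) →L[ℝ] E (2 * d)) : 0 ≤ QQ d p T :=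
  integral_nonneg fun z => mul_nonneg (WW_pos d p z).le (sq_nonneg _)

lemma QQ_pos {d : ℕ} {p : Fin 3 → ℝ} (hp : IsAdmissible p)
    {T : E (2 * d) →L[ℝ] E (2 * d)} (hT : T ≠ 0) : 0 < QQ d p T := by
  rw [QQ, integral_pos_iff_support_of_nonneg
    (fun z => mul_nonneg (WW_pos d p z).le (sq_nonneg _)) (QQ_integrand_integrable hp T)]
  obtain ⟨y₀, hy₀⟩ : ∃ y, T y ≠ 0 := by
    by_contra h
    push_neg at h
    exact hT (ContinuousLinearMap.ext fun y => by simpa using h y)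
  have hcont : Continuous fun z : E (2 * d) × E (2 * d) => WW d p z * ⟪z.1, T z.2⟫_ℝ ^ 2 :=
    (WW_cont d p).mul ((continuous_fst.inner ((T.continuous).comp continuous_snd)).pow 2)
  have hopen : IsOpen (Function.support fun z : E (2 * d) × E (2 * d) =>
      WW d p z * ⟪z.1, T z.2⟫_ℝ ^ 2) := hcont.isOpen_support
  refine hopen.measure_pos volume ⟨(T y₀, y₀), ?_⟩
  have hpos : 0 < ⟪T y₀, T y₀⟫_ℝ := by rw [real_inner_self_eq_norm_sq]; exact pow_pos (norm_pos_iff.mpr hy₀) 2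
  have : 0 < WW d p (T y₀, y₀) * ⟪(T y₀, y₀).1, T (T y₀, y₀).2⟫_ℝ ^ 2 :=
    mul_pos (WW_pos d p _) (pow_pos hpos 2)
  exact ne_of_gt this

lemma QQ_smul (d : ℕ) (p : Fin 3 → ℝ) (c : ℝ) (T : E (2 * d) →L[ℝ] E (2 * d)) :
    QQ d p (c • T) = c ^ 2 * QQ d p T := by
  have h : ∀ z : E (2 * d) × E (2 * d),
      WW d p z * ⟪z.1, (c • T) z.2⟫_ℝ ^ 2 = c ^ 2 * (WW d p z * ⟪z.1, T z.2⟫_ℝ ^ 2) := by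
    intro z
    rw [ContinuousLinearMap.smul_apply, real_inner_smul_right]
    ring
  rw [QQ]
  simp_rw [h]
  rw [integral_const_mul]
  rfl

lemma QQ_zero (d : ℕ) (p : Fin 3 → ℝ) : QQ d p 0 = 0 := by
  have h : ∀ z : E (2 * d) × E (2 * d),
      WW d p z * ⟪z.1, (0 : E (2 * d) →L[ℝ] E (2 * d)) z.2⟫_ℝ ^ 2 = 0 := by
    intro z
    simp
  rw [QQ]
  simp_rw [h]
  exact integral_zero _ _

lemma exists_QQ_bounds {d : ℕ} (hd : 1 ≤ d) {p : Fin 3 → ℝ} (hp : IsAdmissible p) :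
    ∃ c C : ℝ, 0 < c ∧ 0 < C ∧ ∀ T : E (2 * d) →L[ℝ] E (2 * d),
      c * ‖T‖ ^ 2 ≤ QQ d p T ∧ QQ d p T ≤ C * ‖T‖ ^ 2 := by
  haveI hne : Nonempty (Fin (2 * d)) := ⟨⟨0, by omega⟩⟩
  haveI hnt : Nontrivial (E (2 * d)) := by
    refine ⟨EuclideanSpace.single ⟨0, by omega⟩ 1, 0, fun h => ?_⟩
    have := congrArg norm h
    rw [EuclideanSpace.norm_single, norm_zero] at this
    simpa using this
  haveI hntL : Nontrivial (E (2 * d) →L[ℝ] E (2 * d)) := by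
    obtain ⟨x, y, hxy⟩ := hnt
    refine ⟨ContinuousLinearMap.id ℝ (E (2 * d)), 0, fun h => hxy ?_⟩
    have h1 := congrFun (congrArg DFunLike.coe h) x
    have h2 := congrFun (congrArg DFunLike.coe h) y
    simp at h1 h2
    rw [h1, h2]
  have hSne : (Metric.sphere (0 : E (2 * d) →L[ℝ] E (2 * d)) 1).Nonempty :=
    NormedSpace.sphere_nonempty.mpr zero_le_one
  obtain ⟨Tc, hTcS, hmin⟩ :=
    (isCompact_sphere (0 : E (2 * d) →L[ℝ] E (2 * d)) 1).exists_isMinOn hSne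
      (QQ_cont hp).continuousOn
  obtain ⟨TC, hTCS, hmax⟩ :=
    (isCompact_sphere (0 : E (2 * d) →L[ℝ] E (2 * d)) 1).exists_isMaxOn hSne
      (QQ_cont hp).continuousOn
  have hTc1 : ‖Tc‖ = 1 := mem_sphere_zero_iff_norm.mp hTcS
  have hTC1 : ‖TC‖ = 1 := mem_sphere_zero_iff_norm.mp hTCS
  have hTcne : Tc ≠ 0 := by intro h; rw [h, norm_zero] at hTc1; norm_num at hTc1
  have hTCne : TC ≠ 0 := by intro h; rw [h, norm_zero] at hTC1; norm_num at hTC1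
  refine ⟨QQ d p Tc, QQ d p TC, QQ_pos hp hTcne, QQ_pos hp hTCne, fun T => ?_⟩
  rcases eq_or_ne T 0 with rfl | hT
  · rw [norm_zero, QQ_zero]
    norm_num
  · have ht : (0:ℝ) < ‖T‖ := norm_pos_iff.mpr hT
    have hmem : (‖T‖⁻¹ • T) ∈ Metric.sphere (0 : E (2 * d) →L[ℝ] E (2 * d)) 1 := by
      rw [mem_sphere_zero_iff_norm]
      exact norm_smul_inv_norm (𝕜 := ℝ) hT
    have hq : QQ d p (‖T‖⁻¹ • T) = ‖T‖⁻¹ ^ 2 * QQ d p T := QQ_smul d p _ T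
    have h1 := hmin hmem
    have h2 := hmax hmem
    simp only [Set.mem_setOf_eq] at h1 h2
    rw [hq] at h1 h2
    constructor
    · have := mul_le_mul_of_nonneg_left h1 (sq_nonneg ‖T‖)
      calc QQ d p Tc * ‖T‖ ^ 2 = ‖T‖ ^ 2 * QQ d p Tc := by ring
        _ ≤ ‖T‖ ^ 2 * (‖T‖⁻¹ ^ 2 * QQ d p T) := this
        _ = QQ d p T := by field_simp
    · have := mul_le_mul_of_nonneg_left h2 (sq_nonneg ‖T‖)
      calc QQ d p T = ‖T‖ ^ 2 * (‖T‖⁻¹ ^ 2 * QQ d p T) := by field_simp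
        _ ≤ ‖T‖ ^ 2 * QQ d p TC := this
        _ = QQ d p TC * ‖T‖ ^ 2 := by ring

end Statement7Aux2
section Statement7Aux3

lemma mapp_coord {n : ℕ} (M : Matrix (Fin n) (Fin n) ℝ) (x : E n) (i : Fin n) :
    mapp M x i = ∑ k, M i k * x k := rfl

lemma inner_coord {n : ℕ} (x y : E n) : ⟪x, y⟫_ℝ = ∑ i, x i * y i := by
  simp [PiLp.inner_apply, RCLike.inner_apply, conj_trivial]
  exact Finset.sum_congr rfl fun i _ => mul_comm _ _

lemma sum_split {d : ℕ} (f : Fin (2 * d) → ℝ) :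
    ∑ i, f i = ∑ j : Fin d, f ⟨j.1, by have := j.2; omega⟩
      + ∑ j : Fin d, f ⟨j.1 + d, by have := j.2; omega⟩ := by
  let e : Fin d ⊕ Fin d ≃ Fin (2 * d) := finSumFinEquiv.trans (finCongr (two_mul d).symm)
  have h1 : ∀ j : Fin d, e (Sum.inl j) = ⟨j.1, by have := j.2; omega⟩ := by
    intro j; ext
    simp [e, finSumFinEquiv_apply_left]
  have h2 : ∀ j : Fin d, e (Sum.inr j) = ⟨j.1 + d, by have := j.2; omega⟩ := by
    intro j; ext
    simp only [e, Equiv.trans_apply, finSumFinEquiv_apply_right, finCongr_apply, Fin.coe_cast,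
      Fin.coe_natAdd]
    omega
  rw [← Equiv.sum_comp e f, Fintype.sum_sum_type]
  rw [Finset.sum_congr rfl fun j _ => congrArg f (h1 j),
    Finset.sum_congr rfl fun j _ => congrArg f (h2 j)]

lemma Jmat_lo {d : ℕ} (y : E (2 * d)) (j : Fin d) :
    mapp (Jmat d) y ⟨j.1, by have := j.2; omega⟩ = y ⟨j.1 + d, by have := j.2; omega⟩ := by
  rw [mapp_coord]
  calc (∑ k, Jmat d ⟨j.1, by have := j.2; omega⟩ k * y k)
      = Jmat d ⟨j.1, by have := j.2; omega⟩ ⟨j.1 + d, by have := j.2; omega⟩ *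
        y ⟨j.1 + d, by have := j.2; omega⟩ := by
        refine Finset.sum_eq_single _ (fun k _ hk => ?_) (fun h => absurd (Finset.mem_univ _) h)
        rw [Jmat]
        simp only [Matrix.of_apply]
        split_ifs with h1 h2
        · exact absurd (Fin.ext h1.2) hk
        · exact absurd (h2.trans_lt j.2) (Nat.not_lt.mpr (Nat.le_add_left d k.1))
        · exact zero_mul _
    _ = y ⟨j.1 + d, by have := j.2; omega⟩ := by
        rw [Jmat]
        simp only [Matrix.of_apply]
        split_ifs with h1 h2
        · exact one_mul _
        · exact absurd ⟨j.2, trivial⟩ h1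
        · exact absurd ⟨j.2, trivial⟩ h1

lemma Jmat_hi {d : ℕ} (y : E (2 * d)) (j : Fin d) :
    mapp (Jmat d) y ⟨j.1 + d, by have := j.2; omega⟩ = -y ⟨j.1, by have := j.2; omega⟩ := by
  rw [mapp_coord]
  calc (∑ k, Jmat d ⟨j.1 + d, by have := j.2; omega⟩ k * y k)
      = Jmat d ⟨j.1 + d, by have := j.2; omega⟩ ⟨j.1, by have := j.2; omega⟩ *
        y ⟨j.1, by have := j.2; omega⟩ := by
        refine Finset.sum_eq_single _ (fun k _ hk => ?_) (fun h => absurd (Finset.mem_univ _) h)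
        rw [Jmat]
        simp only [Matrix.of_apply]
        split_ifs with h1 h2
        · exact absurd h1.1 (Nat.not_lt.mpr (Nat.le_add_left d j.1))
        · exact absurd (Fin.ext (Nat.add_right_cancel h2)) hk
        · exact zero_mul _
    _ = -y ⟨j.1, by have := j.2; omega⟩ := by
        rw [Jmat]
        simp only [Matrix.of_apply]
        split_ifs with h1 h2
        · exact absurd h1.1 (Nat.not_lt.mpr (Nat.le_add_left d j.1))
        · exact neg_one_mul _

lemma symp_eq {d : ℕ} (x y : E (2 * d)) : symp d x y = ⟪x, mapp (Jmat d) y⟫_ℝ := by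
  rw [inner_coord, sum_split (fun i => x i * mapp (Jmat d) y i), ← Finset.sum_add_distrib]
  refine Finset.sum_congr rfl fun j _ => ?_
  rw [Jmat_lo y j, Jmat_hi y j]
  ring

lemma mapp_mul {n : ℕ} (M N : Matrix (Fin n) (Fin n) ℝ) (x : E n) :
    mapp (M * N) x = mapp M (mapp N x) := by
  simp [mapp, Matrix.toEuclideanLin_apply, Matrix.mulVec_mulVec]

lemma inner_mapp_transpose {n : ℕ} (M : Matrix (Fin n) (Fin n) ℝ) (x y : E n) :
    ⟪mapp M x, y⟫_ℝ = ⟪x, mapp Mᵀ y⟫_ℝ := by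
  simp only [inner_coord, mapp_coord, Matrix.transpose_apply, Finset.sum_mul, Finset.mul_sum]
  rw [Finset.sum_comm]
  exact Finset.sum_congr rfl fun i _ => Finset.sum_congr rfl fun k _ => by ring

lemma symp_mapp {d : ℕ} (A : Matrix (Fin (2 * d)) (Fin (2 * d)) ℝ) (x y : E (2 * d)) :
    symp d (mapp A x) (mapp A y) = ⟪x, mapp (Aᵀ * Jmat d * A) y⟫_ℝ := by
  rw [symp_eq, inner_mapp_transpose, ← mapp_mul, ← mapp_mul]

end Statement7Aux3
/-- Size of the second-order symplectic term. -/
theorem statement7 (d : ℕ) (hd : 1 ≤ d) (p : Fin 3 → ℝ) (hp : IsAdmissible p) :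
    ∃ c C : ℝ, 0 < c ∧ 0 < C ∧ ∀ A : Matrix (Fin (2 * d)) (Fin (2 * d)) ℝ,
      c * opNorm (Aᵀ * Jmat d * A) ^ 2 ≤
        (∫ x : E (2 * d), ∫ y : E (2 * d),
          gaussER (2 * d) p 0 x * gaussER (2 * d) p 1 y * gaussER (2 * d) p 2 (x + y) *
            symp d (mapp A x) (mapp A y) ^ 2) ∧
      (∫ x : E (2 * d), ∫ y : E (2 * d),
          gaussER (2 * d) p 0 x * gaussER (2 * d) p 1 y * gaussER (2 * d) p 2 (x + y) *
            symp d (mapp A x) (mapp A y) ^ 2) ≤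
        C * opNorm (Aᵀ * Jmat d * A) ^ 2 := by
  obtain ⟨c, C, hc, hC, hQ⟩ := exists_QQ_bounds hd hp
  refine ⟨c, C, hc, hC, fun A => ?_⟩
  set T : E (2 * d) →L[ℝ] E (2 * d) :=
    LinearMap.toContinuousLinearMap (Matrix.toEuclideanLin (Aᵀ * Jmat d * A)) with hT
  have hnorm : opNorm (Aᵀ * Jmat d * A) = ‖T‖ := rfl
  have hintegrand : ∀ x y : E (2 * d),
      gaussER (2 * d) p 0 x * gaussER (2 * d) p 1 y * gaussER (2 * d) p 2 (x + y) *
        symp d (mapp A x) (mapp A y) ^ 2 =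
      (fun z : E (2 * d) × E (2 * d) => WW d p z * ⟪z.1, T z.2⟫_ℝ ^ 2) (x, y) := by
    intro x y
    rw [symp_mapp]
    rfl
  have hint : Integrable
      (fun z : E (2 * d) × E (2 * d) => WW d p z * ⟪z.1, T z.2⟫_ℝ ^ 2)
      (volume.prod volume) := by
    have := QQ_integrand_integrable hp T
    rwa [show (volume : Measure (E (2 * d) × E (2 * d))) = volume.prod volume from
      Measure.volume_eq_prod _ _] at this
  have heq : (∫ x : E (2 * d), ∫ y : E (2 * d),
      gaussER (2 * d) p 0 x * gaussER (2 * d) p 1 y * gaussER (2 * d) p 2 (x + y) *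
        symp d (mapp A x) (mapp A y) ^ 2) = QQ d p T := by
    simp_rw [hintegrand]
    rw [QQ, show (volume : Measure (E (2 * d) × E (2 * d))) = volume.prod volume from
      Measure.volume_eq_prod _ _]
    exact integral_integral hint
  rw [heq, hnorm]
  exact hQ T

end Stability
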